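/- If P is a nonabelian finite p-group of order p^n, then the derived length of P is at most 1 + log₂(n). -/

import Mathlib

/-- The derived length of a group: the least `n` with `derivedSeries G n = ⊥`. -/
noncomputable def derivedLength (G : Type*) [Group G] : ℕ :=
  sInf {n | derivedSeries G n = ⊥}

section Aux

open Subgroup

variable {G : Type*} [Group G]

/-- Relative three subgroups lemma. -/
theorem three_subgroups_le {A B C N : Subgroup G} [N.Normal]
    (h1 : ⁅⁅A, B⁆, C⁆ ≤ N) (h2 : ⁅⁅B, C⁆, A⁆ ≤ N) : ⁅⁅C, A⁆, B⁆ ≤ N := by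
  let f := QuotientGroup.mk' N
  have key : ∀ {X Y Z : Subgroup G}, ⁅⁅X, Y⁆, Z⁆ ≤ N ↔ ⁅⁅X.map f, Y.map f⁆, Z.map f⁆ = ⊥ := by
    intro X Y Z
    rw [← map_commutator, ← map_commutator, Subgroup.map_eq_bot_iff, QuotientGroup.ker_mk']
  rw [key]
  exact Subgroup.commutator_commutator_eq_bot_of_rotate (key.mp h1) (key.mp h2)

theorem lcs_commutator_le (j i : ℕ) :
    ⁅Subgroup.lowerCentralSeries (⊤ : Subgroup G) i, Subgroup.lowerCentralSeries (⊤ : Subgroup G) j⁆ ≤ Subgroup.lowerCentralSeries (⊤ : Subgroup G) (i + j + 1) := by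
  induction j generalizing i with
  | zero =>
    rw [Subgroup.lowerCentralSeries_zero]
    exact le_of_eq rfl
  | succ j ih =>
    have e1 : ⁅(⊤ : Subgroup G), Subgroup.lowerCentralSeries (⊤ : Subgroup G) i⁆ = Subgroup.lowerCentralSeries (⊤ : Subgroup G) (i + 1) := by
      rw [commutator_comm]; rfl
    have h1 : ⁅⁅(⊤ : Subgroup G), Subgroup.lowerCentralSeries (⊤ : Subgroup G) i⁆, Subgroup.lowerCentralSeries (⊤ : Subgroup G) j⁆ ≤
        Subgroup.lowerCentralSeries (⊤ : Subgroup G) (i + (j + 1) + 1) := by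
      rw [e1]
      have := ih (i + 1)
      have heq : i + 1 + j + 1 = i + (j + 1) + 1 := by omega
      rwa [heq] at this
    have h2 : ⁅⁅Subgroup.lowerCentralSeries (⊤ : Subgroup G) i, Subgroup.lowerCentralSeries (⊤ : Subgroup G) j⁆, (⊤ : Subgroup G)⁆ ≤
        Subgroup.lowerCentralSeries (⊤ : Subgroup G) (i + (j + 1) + 1) := by
      exact Subgroup.commutator_mono (ih i) le_rfl
    have goal := three_subgroups_le h1 h2
    have e2 : Subgroup.lowerCentralSeries (⊤ : Subgroup G) (j + 1) = ⁅Subgroup.lowerCentralSeries (⊤ : Subgroup G) j, (⊤ : Subgroup G)⁆ := rfl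
    rw [e2, commutator_comm]
    exact goal

theorem derivedSeries_le_lcs (k : ℕ) :
    derivedSeries G k ≤ Subgroup.lowerCentralSeries (⊤ : Subgroup G) (2 ^ k - 1) := by
  induction k with
  | zero => rw [pow_zero]; exact le_of_eq rfl
  | succ k ih =>
    have h : derivedSeries G (k + 1) = ⁅derivedSeries G k, derivedSeries G k⁆ := rfl
    rw [h]
    calc ⁅derivedSeries G k, derivedSeries G k⁆
        ≤ ⁅Subgroup.lowerCentralSeries (⊤ : Subgroup G) (2 ^ k - 1), Subgroup.lowerCentralSeries (⊤ : Subgroup G) (2 ^ k - 1)⁆ :=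
          Subgroup.commutator_mono ih ih
      _ ≤ Subgroup.lowerCentralSeries (⊤ : Subgroup G) ((2 ^ k - 1) + (2 ^ k - 1) + 1) := lcs_commutator_le _ _
      _ = Subgroup.lowerCentralSeries (⊤ : Subgroup G) (2 ^ (k + 1) - 1) := by
          congr 1
          have h1 : 1 ≤ 2 ^ k := Nat.one_le_two_pow
          have h2 : 2 ^ (k + 1) = 2 * 2 ^ k := by ring
          omega

theorem lcs_stabilizes {i : ℕ} (h : Subgroup.lowerCentralSeries (⊤ : Subgroup G) i = Subgroup.lowerCentralSeries (⊤ : Subgroup G) (i + 1)) :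
    ∀ j, Subgroup.lowerCentralSeries (⊤ : Subgroup G) (i + j) = Subgroup.lowerCentralSeries (⊤ : Subgroup G) i := by
  intro j
  induction j with
  | zero => rfl
  | succ j ih =>
    have e : Subgroup.lowerCentralSeries (⊤ : Subgroup G) (i + (j + 1)) = ⁅Subgroup.lowerCentralSeries (⊤ : Subgroup G) (i + j), (⊤ : Subgroup G)⁆ := rfl
    rw [e, ih]
    exact h.symm

/-- In a finite `p`-group of order `p ^ n`, a nontrivial term of the lower central
series at index `m` forces `m < n`. -/
theorem lcs_index_lt {p n : ℕ} (hp : p.Prime) [Fintype G]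
    (hcard : Nat.card G = p ^ n) {m : ℕ} (hm : Subgroup.lowerCentralSeries (⊤ : Subgroup G) m ≠ ⊥) : m < n := by
  haveI : Fact p.Prime := ⟨hp⟩
  have hpG : IsPGroup p G := IsPGroup.of_card hcard
  have hnil : Group.IsNilpotent G := hpG.isNilpotent
  have key : ∀ m, Subgroup.lowerCentralSeries (⊤ : Subgroup G) m ≠ ⊥ →
      ∃ e, Nat.card (Subgroup.lowerCentralSeries (⊤ : Subgroup G) m) = p ^ e ∧ e + m ≤ n ∧ 1 ≤ e := by
    intro m
    induction m with
    | zero =>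
      intro hne
      refine ⟨n, ?_, by omega, ?_⟩
      · exact Subgroup.card_top.trans hcard
      · by_contra h
        have he : n = 0 := by omega
        rw [he, pow_zero] at hcard
        haveI : Subsingleton G := (Nat.card_eq_one_iff_unique.mp hcard).1
        exact hne (Subsingleton.elim _ _)
    | succ m ih =>
      intro hne
      have hm : Subgroup.lowerCentralSeries (⊤ : Subgroup G) m ≠ ⊥ := by
        intro hbot
        apply hne
        rw [eq_bot_iff, ← hbot]
        exact (Subgroup.lowerCentralSeries_antitone ⊤) (Nat.le_succ m)
      obtain ⟨e, hcardm, hle, he1⟩ := ih hm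
      have hlt : Subgroup.lowerCentralSeries (⊤ : Subgroup G) (m + 1) < Subgroup.lowerCentralSeries (⊤ : Subgroup G) m := by
        have hle2 : Subgroup.lowerCentralSeries (⊤ : Subgroup G) (m + 1) ≤ Subgroup.lowerCentralSeries (⊤ : Subgroup G) m :=
          (Subgroup.lowerCentralSeries_antitone ⊤) (Nat.le_succ m)
        rcases lt_or_eq_of_le hle2 with h | h
        · exact h
        · exfalso
          obtain ⟨c, hc⟩ := Subgroup.nilpotent_iff_lowerCentralSeries.mp hnil
          have := lcs_stabilizes h.symm (c + 1)
          apply hm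
          rw [← this, eq_bot_iff, ← hc]
          exact (Subgroup.lowerCentralSeries_antitone ⊤) (by omega)
      have hsub : IsPGroup p (Subgroup.lowerCentralSeries (⊤ : Subgroup G) (m + 1)) := hpG.to_subgroup _
      obtain ⟨e', he'⟩ := IsPGroup.iff_card.mp hsub
      have hcardlt : Nat.card (Subgroup.lowerCentralSeries (⊤ : Subgroup G) (m + 1)) <
          Nat.card (Subgroup.lowerCentralSeries (⊤ : Subgroup G) m) := by
        have hle3 : Nat.card (Subgroup.lowerCentralSeries (⊤ : Subgroup G) (m + 1)) ≤ Nat.card (Subgroup.lowerCentralSeries (⊤ : Subgroup G) m) :=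
          Subgroup.card_le_of_le hlt.le
        rcases lt_or_eq_of_le hle3 with h | h
        · exact h
        · exact absurd (Subgroup.eq_of_le_of_card_ge hlt.le h.ge) hlt.ne
      rw [he', hcardm] at hcardlt
      have helt : e' < e := by
        by_contra hcon
        push_neg at hcon
        exact absurd (Nat.pow_le_pow_right hp.pos hcon) (not_le.mpr hcardlt)
      refine ⟨e', he', by omega, ?_⟩
      by_contra h
      have h0 : e' = 0 := by omega
      rw [h0, pow_zero] at he'
      exact hne (Subgroup.eq_bot_of_card_eq _ he')
  obtain ⟨e, _, hle, he1⟩ := key m hm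
  omega

end Aux

/-- If `P` is a nonabelian finite `p`-group of order `p ^ n`, then the derived length
of `P` is at most `1 + log₂ n`. -/
theorem stmt1 {P : Type*} [Group P] [Fintype P] {p n : ℕ} (hp : p.Prime)
    (hcard : Fintype.card P = p ^ n)
    (hna : ¬ ∀ a b : P, a * b = b * a) :
    (derivedLength P : ℝ) ≤ 1 + Real.logb 2 n := by
  haveI : Fact p.Prime := ⟨hp⟩
  have hncard : Nat.card P = p ^ n := by rw [Nat.card_eq_fintype_card, hcard]
  have hpG : IsPGroup p P := IsPGroup.of_card hncard
  have hnil : Group.IsNilpotent P := hpG.isNilpotent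
  haveI hsolv : Group.IsSolvable P := inferInstance
  obtain ⟨c, hc⟩ := hsolv.solvable
  have hne : {k | derivedSeries P k = ⊥}.Nonempty := ⟨c, hc⟩
  set d := derivedLength P with hd
  have hdmem : derivedSeries P d = ⊥ := Nat.sInf_mem hne
  have hd2 : 2 ≤ d := by
    by_contra h
    push_neg at h
    interval_cases d
    · apply hna
      intro a b
      have ha : a ∈ derivedSeries P 0 := Subgroup.mem_top a
      have hb : b ∈ derivedSeries P 0 := Subgroup.mem_top b
      rw [hdmem, Subgroup.mem_bot] at ha hb
      rw [ha, hb]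
    · apply hna
      intro a b
      open commutatorElement in have hab : ⁅a, b⁆ ∈ derivedSeries P 1 :=
        Subgroup.commutator_mem_commutator (Subgroup.mem_top a) (Subgroup.mem_top b)
      rw [hdmem, Subgroup.mem_bot, commutatorElement_eq_one_iff_mul_comm] at hab
      exact hab
  have hprev : derivedSeries P (d - 1) ≠ ⊥ := by
    intro hbot
    have : d ≤ d - 1 := Nat.sInf_le hbot
    omega
  have hlcs : Subgroup.lowerCentralSeries (⊤ : Subgroup P) (2 ^ (d - 1) - 1) ≠ ⊥ := by
    intro hbot
    apply hprev
    rw [eq_bot_iff, ← hbot]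
    exact derivedSeries_le_lcs _
  have hmn : 2 ^ (d - 1) - 1 < n := lcs_index_lt hp hncard hlcs
  have hkey : 2 ^ (d - 1) ≤ n := by
    have : 1 ≤ 2 ^ (d - 1) := Nat.one_le_two_pow
    omega
  have h21 : (2 : ℕ) ≤ 2 ^ (d - 1) := by
    calc (2 : ℕ) = 2 ^ 1 := (pow_one 2).symm
      _ ≤ 2 ^ (d - 1) := Nat.pow_le_pow_right (by norm_num) (by omega)
  have h1 : ((d - 1 : ℕ) : ℝ) ≤ Real.logb 2 n := by
    have hx : ((2 : ℝ) ^ (d - 1)) ≤ (n : ℝ) := by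
      calc ((2 : ℝ) ^ (d - 1)) = ((2 ^ (d - 1) : ℕ) : ℝ) := by push_cast; ring
        _ ≤ (n : ℝ) := by exact_mod_cast hkey
    have hmono : Real.logb 2 ((2 : ℝ) ^ (d - 1)) ≤ Real.logb 2 (n : ℝ) :=
      Real.logb_le_logb_of_le (by norm_num) (by positivity) hx
    rwa [Real.logb_pow, Real.logb_self_eq_one (by norm_num), mul_one] at hmono
  have hcast : ((d - 1 : ℕ) : ℝ) = (d : ℝ) - 1 := by
    have : 1 ≤ d := by omega
    push_cast [this]
    ring
  rw [hcast] at h1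
  linarith
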